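/- arXiv:1807.04802 — 6 statements merged into one kernel-verified Lean document; each statement's English description precedes it below -/
import Mathlib

section
/- Let G be a bipartite graph with parts A and B, M a matching, and y a dual weight function with y(b) ≥ 0 for all b ∈ B and y(a) ≤ 0 for all a ∈ A. Suppose M is 1-feasible: for every edge (u,v), y(u)+y(v) ≤ c(u,v)+1, and for every matching edge (u,v), y(u)+y(v) ≥ c(u,v)−1. If M is a perfect matching (1-optimal) and M_opt is a minimum-cost perfect matching, then c(M) ≤ c(M_opt) + 2n, where n = |A| = |B|. -/
/-- A perfect matching of the bipartite graph with parts `A`, `B` and edge set `E`: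
every vertex of `A` is the first endpoint of exactly one matching edge, and every
vertex of `B` is the second endpoint of exactly one matching edge. -/
def IsPerfectMatching {V : Type*} (A B : Finset V) (E M : Finset (V × V)) : Prop :=
  M ⊆ E ∧ (∀ a ∈ A, ∃! e, e ∈ M ∧ e.1 = a) ∧ (∀ b ∈ B, ∃! e, e ∈ M ∧ e.2 = b)

lemma sum_fst {V : Type*} (A B : Finset V) (E M : Finset (V × V))
    (hE : ∀ e ∈ E, e.1 ∈ A ∧ e.2 ∈ B) (hM : IsPerfectMatching A B E M)
    (f : V → ℤ) : ∑ e ∈ M, f e.1 = ∑ a ∈ A, f a := by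
  obtain ⟨hsub, h1, h2⟩ := hM
  refine Finset.sum_bij (fun e _ => e.1) (fun e he => (hE e (hsub he)).1) ?_ ?_ (fun _ _ => rfl)
  · intro e he e' he' h
    obtain ⟨u, hu, huniq⟩ := h1 e.1 (hE e (hsub he)).1
    rw [huniq e ⟨he, rfl⟩, huniq e' ⟨he', h.symm⟩]
  · intro a ha
    obtain ⟨e, ⟨he, he1⟩, _⟩ := h1 a ha
    exact ⟨e, he, he1⟩

lemma sum_snd {V : Type*} (A B : Finset V) (E M : Finset (V × V))
    (hE : ∀ e ∈ E, e.1 ∈ A ∧ e.2 ∈ B) (hM : IsPerfectMatching A B E M)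
    (f : V → ℤ) : ∑ e ∈ M, f e.2 = ∑ b ∈ B, f b := by
  obtain ⟨hsub, h1, h2⟩ := hM
  refine Finset.sum_bij (fun e _ => e.2) (fun e he => (hE e (hsub he)).2) ?_ ?_ (fun _ _ => rfl)
  · intro e he e' he' h
    obtain ⟨u, hu, huniq⟩ := h2 e.2 (hE e (hsub he)).2
    rw [huniq e ⟨he, rfl⟩, huniq e' ⟨he', h.symm⟩]
  · intro b hb
    obtain ⟨e, ⟨he, he2⟩, _⟩ := h2 b hb
    exact ⟨e, he, he2⟩

lemma card_eq {V : Type*} (A B : Finset V) (E M : Finset (V × V))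
    (hE : ∀ e ∈ E, e.1 ∈ A ∧ e.2 ∈ B) (hM : IsPerfectMatching A B E M) :
    M.card = A.card := by
  have := sum_fst A B E M hE hM (fun _ => (1 : ℤ))
  simpa using this

/-- If `M` is a `1`-optimal matching (a perfect matching with duals satisfying the
`1`-feasibility conditions) and `Mopt` is a minimum-cost perfect matching, then
`c(M) ≤ c(Mopt) + 2n`. -/
theorem one_optimal_cost_le {V : Type*} [DecidableEq V]
    (A B : Finset V) (E M Mopt : Finset (V × V))
    (c : V × V → ℤ) (y : V → ℤ) (n : ℕ)
    (hA : A.card = n) (hB : B.card = n) (hAB : Disjoint A B)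
    (hE : ∀ e ∈ E, e.1 ∈ A ∧ e.2 ∈ B)
    (hyB : ∀ b ∈ B, 0 ≤ y b) (hyA : ∀ a ∈ A, y a ≤ 0)
    (hfeas1 : ∀ e ∈ E, y e.1 + y e.2 ≤ c e + 1)
    (hfeas2 : ∀ e ∈ M, c e - 1 ≤ y e.1 + y e.2)
    (hM : IsPerfectMatching A B E M)
    (hMopt : IsPerfectMatching A B E Mopt)
    (hopt : ∀ M' : Finset (V × V), IsPerfectMatching A B E M' →
      ∑ e ∈ Mopt, c e ≤ ∑ e ∈ M', c e) :
    ∑ e ∈ M, c e ≤ ∑ e ∈ Mopt, c e + 2 * n := by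
  have Y : ℤ := 0
  have hMcard : M.card = n := by rw [card_eq A B E M hE hM, hA]
  have hOcard : Mopt.card = n := by rw [card_eq A B E Mopt hE hMopt, hA]
  have h1 : ∑ e ∈ M, c e ≤ (∑ a ∈ A, y a + ∑ b ∈ B, y b) + n := by
    calc ∑ e ∈ M, c e ≤ ∑ e ∈ M, (y e.1 + y e.2 + 1) := by
          apply Finset.sum_le_sum; intro e he
          have := hfeas2 e he; omega
      _ = (∑ a ∈ A, y a + ∑ b ∈ B, y b) + n := by
          rw [Finset.sum_add_distrib, Finset.sum_add_distrib,
            sum_fst A B E M hE hM, sum_snd A B E M hE hM]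
          simp [hMcard]
  have h2 : (∑ a ∈ A, y a + ∑ b ∈ B, y b) - n ≤ ∑ e ∈ Mopt, c e := by
    calc (∑ a ∈ A, y a + ∑ b ∈ B, y b) - n
        = ∑ e ∈ Mopt, (y e.1 + y e.2 - 1) := by
          rw [Finset.sum_sub_distrib, Finset.sum_add_distrib,
            sum_fst A B E Mopt hE hMopt, sum_snd A B E Mopt hE hMopt]
          simp [hOcard]
      _ ≤ ∑ e ∈ Mopt, c e := by
          apply Finset.sum_le_sum; intro e he
          have := hfeas1 e (hMopt.1 he); omega
  omega
end

section
/- Let G be a bipartite graph with edge error values δ(u,v) ≥ 1 and an R-feasible matching M with duals y, meaning: y(u)+y(v) ≤ c(u,v)+δ(u,v) for every non-matching edge (u,v) and y(u)+y(v) ≥ c(u,v)−δ(u,v) for every matching edge. Define the slack s(u,v) = c(u,v)+δ(u,v)−y(u)−y(v) for non-matching edges and s(u,v) = y(u)+y(v)−c(u,v)+δ(u,v) for matching edges. Call an edge admissible if s(u,v) ≤ δ(u,v)/2. If P is a set of edges forming an alternating path or alternating cycle in the residual graph consisting only of admissible edges, then M' = M ⊕ P together with the same duals y is also R-feasible, and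 moreover every edge (u,v) of P has slack at least δ(u,v) with respect to M'. -/
/-- The slack of edge `e` with respect to matching `M`, costs `c`, errors `δ`
and duals `y`: `c e + δ e - y e.1 - y e.2` for non-matching edges and
`y e.1 + y e.2 - c e + δ e` for matching edges. -/
def slack {V : Type*} [DecidableEq V] (M : Finset (V × V)) (c δ : V × V → ℝ)
    (y : V → ℝ) (e : V × V) : ℝ :=
  if e ∈ M then y e.1 + y e.2 - c e + δ e else c e + δ e - y e.1 - y e.2

/-- If `M, y` is `R`-feasible (all slacks non-negative) and `P` is an alternating
path or cycle consisting only of admissible edges (slack at most `δ/2`), then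
`M ⊕ P` with the same duals is again `R`-feasible, and every edge of `P` has slack
at least `δ` with respect to `M ⊕ P`. -/
theorem symmDiff_admissible_RFeasible {V : Type*} [DecidableEq V]
    (E M P : Finset (V × V)) (c δ : V × V → ℝ) (y : V → ℝ)
    (hδ : ∀ e ∈ E, 1 ≤ δ e) (hM : M ⊆ E) (hP : P ⊆ E)
    (hfeas : ∀ e ∈ E, 0 ≤ slack M c δ y e)
    (hadm : ∀ e ∈ P, slack M c δ y e ≤ δ e / 2) :
    (∀ e ∈ E, 0 ≤ slack (symmDiff M P) c δ y e) ∧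
    (∀ e ∈ P, δ e ≤ slack (symmDiff M P) c δ y e) := by
  have key : ∀ e, slack (symmDiff M P) c δ y e =
      if e ∈ P then 2 * δ e - slack M c δ y e else slack M c δ y e := by
    intro e
    by_cases hp : e ∈ P <;> by_cases hm : e ∈ M <;>
      simp [slack, Finset.mem_symmDiff, hp, hm] <;> ring
  constructor
  · intro e he
    rw [key]
    by_cases hp : e ∈ P
    · simp only [hp, if_pos]
      have h1 := hadm e hp
      have h2 := hδ e he
      linarith
    · simpa [hp] using hfeas e he
  · intro e hp
    rw [key]
    simp only [hp, if_pos]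
    have h1 := hadm e hp
    have h2 := hδ e (hP hp)
    have h3 := hfeas e (hP hp)
    linarith
end

section
/- Let M be an R-feasible matching with duals y such that every free vertex b ∈ B has y(b) ≥ 0 and every free vertex a ∈ A has y(a) = 0. Let M_opt be any perfect matching. Then c(M) ≤ c(M_opt) + ∑_{(u,v) ∈ M ⊕ M_opt} δ(u,v). -/
/-- A matching: a set of edges (pairs in `A × B`) that are pairwise vertex disjoint. -/
def IsMatching {V : Type*} (M : Finset (V × V)) : Prop :=
  ∀ e ∈ M, ∀ f ∈ M, e ≠ f → e.1 ≠ f.1 ∧ e.2 ≠ f.2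

/-- If `M, y` is an `R`-feasible matching with `y(b) ≥ 0` on free `B`-vertices and
`y(a) = 0` on free `A`-vertices, and `Mopt` is any perfect matching, then
`c(M) ≤ c(Mopt) + ∑_{(u,v) ∈ M ⊕ Mopt} δ(u,v)`. -/
theorem cost_le_opt_add_delta {V : Type*} [DecidableEq V]
    (A B : Finset V) (E M Mopt : Finset (V × V))
    (c δ : V × V → ℝ) (y : V → ℝ) (n : ℕ)
    (hA : A.card = n) (hB : B.card = n) (hAB : Disjoint A B)
    (hE : ∀ e ∈ E, e.1 ∈ A ∧ e.2 ∈ B)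
    (hδ : ∀ e ∈ E, 1 ≤ δ e)
    (hM : M ⊆ E) (hMm : IsMatching M)
    (hMopt : Mopt ⊆ E) (hMoptm : IsMatching Mopt)
    (hperfA : ∀ a ∈ A, ∃ e ∈ Mopt, e.1 = a)
    (hperfB : ∀ b ∈ B, ∃ e ∈ Mopt, e.2 = b)
    (hfeas : ∀ e ∈ E, 0 ≤ slack M c δ y e)
    (hfreeB : ∀ b ∈ B, (∀ e ∈ M, e.2 ≠ b) → 0 ≤ y b)
    (hfreeA : ∀ a ∈ A, (∀ e ∈ M, e.1 ≠ a) → y a = 0) :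
    ∑ e ∈ M, c e ≤ ∑ e ∈ Mopt, c e + ∑ e ∈ symmDiff M Mopt, δ e := by

  classical
  -- fst/snd injective on M, Mopt
  have hMfst : ∀ e ∈ M, ∀ f ∈ M, e.1 = f.1 → e = f := by
    intro e he f hf h
    by_contra hne
    exact (hMm e he f hf hne).1 h
  have hMsnd : ∀ e ∈ M, ∀ f ∈ M, e.2 = f.2 → e = f := by
    intro e he f hf h
    by_contra hne
    exact (hMm e he f hf hne).2 h
  have hOfst : ∀ e ∈ Mopt, ∀ f ∈ Mopt, e.1 = f.1 → e = f := by
    intro e he f hf h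
    by_contra hne
    exact (hMoptm e he f hf hne).1 h
  have hOsnd : ∀ e ∈ Mopt, ∀ f ∈ Mopt, e.2 = f.2 → e = f := by
    intro e he f hf h
    by_contra hne
    exact (hMoptm e he f hf hne).2 h
  set Am := M.image Prod.fst with hAm
  set Bm := M.image Prod.snd with hBm
  have hAmA : Am ⊆ A := by
    intro a ha
    obtain ⟨e, he, rfl⟩ := Finset.mem_image.mp ha
    exact (hE e (hM he)).1
  have hBmB : Bm ⊆ B := by
    intro b hb
    obtain ⟨e, he, rfl⟩ := Finset.mem_image.mp hb
    exact (hE e (hM he)).2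
  have hOA : Mopt.image Prod.fst = A := by
    apply Finset.Subset.antisymm
    · intro a ha
      obtain ⟨e, he, rfl⟩ := Finset.mem_image.mp ha
      exact (hE e (hMopt he)).1
    · intro a ha
      obtain ⟨e, he, h⟩ := hperfA a ha
      exact Finset.mem_image.mpr ⟨e, he, h⟩
  have hOB : Mopt.image Prod.snd = B := by
    apply Finset.Subset.antisymm
    · intro b hb
      obtain ⟨e, he, rfl⟩ := Finset.mem_image.mp hb
      exact (hE e (hMopt he)).2
    · intro b hb
      obtain ⟨e, he, h⟩ := hperfB b hb
      exact Finset.mem_image.mpr ⟨e, he, h⟩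
  -- sums of duals
  have sM1 : ∑ a ∈ Am, y a = ∑ e ∈ M, y e.1 := Finset.sum_image hMfst
  have sM2 : ∑ b ∈ Bm, y b = ∑ e ∈ M, y e.2 := Finset.sum_image hMsnd
  have sO1 : ∑ a ∈ A, y a = ∑ e ∈ Mopt, y e.1 := by
    rw [← hOA]; exact Finset.sum_image hOfst
  have sO2 : ∑ b ∈ B, y b = ∑ e ∈ Mopt, y e.2 := by
    rw [← hOB]; exact Finset.sum_image hOsnd
  have hAfree : ∑ a ∈ A \ Am, y a = 0 := by
    apply Finset.sum_eq_zero
    intro a ha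
    obtain ⟨haA, haAm⟩ := Finset.mem_sdiff.mp ha
    apply hfreeA a haA
    intro e he h
    exact haAm (Finset.mem_image.mpr ⟨e, he, h⟩)
  have hBfree : 0 ≤ ∑ b ∈ B \ Bm, y b := by
    apply Finset.sum_nonneg
    intro b hb
    obtain ⟨hbB, hbBm⟩ := Finset.mem_sdiff.mp hb
    apply hfreeB b hbB
    intro e he h
    exact hbBm (Finset.mem_image.mpr ⟨e, he, h⟩)
  have splitA : ∑ a ∈ A \ Am, y a + ∑ a ∈ Am, y a = ∑ a ∈ A, y a :=
    Finset.sum_sdiff hAmA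
  have splitB : ∑ b ∈ B \ Bm, y b + ∑ b ∈ Bm, y b = ∑ b ∈ B, y b :=
    Finset.sum_sdiff hBmB
  have hsum1 : ∑ e ∈ M, (y e.1 + y e.2) ≤ ∑ e ∈ Mopt, (y e.1 + y e.2) := by
    rw [Finset.sum_add_distrib, Finset.sum_add_distrib]
    linarith
  -- slack bounds
  have hMc : ∀ e ∈ M \ Mopt, c e ≤ y e.1 + y e.2 + δ e := by
    intro e he
    have heM := (Finset.mem_sdiff.mp he).1
    have := hfeas e (hM heM)
    simp only [slack, if_pos heM] at this
    linarith
  have hOc : ∀ e ∈ Mopt \ M, y e.1 + y e.2 - δ e ≤ c e := by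
    intro e he
    obtain ⟨heO, heM⟩ := Finset.mem_sdiff.mp he
    have := hfeas e (hMopt heO)
    simp only [slack, if_neg heM] at this
    linarith
  have bM : ∑ e ∈ M \ Mopt, c e ≤ ∑ e ∈ M \ Mopt, (y e.1 + y e.2 + δ e) :=
    Finset.sum_le_sum hMc
  have bO : ∑ e ∈ Mopt \ M, (y e.1 + y e.2 - δ e) ≤ ∑ e ∈ Mopt \ M, c e :=
    Finset.sum_le_sum hOc
  -- splits
  have e1 : ∑ e ∈ M ∩ Mopt, c e + ∑ e ∈ M \ Mopt, c e = ∑ e ∈ M, c e :=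
    Finset.sum_inter_add_sum_sdiff M Mopt c
  have e2 : ∑ e ∈ M ∩ Mopt, c e + ∑ e ∈ Mopt \ M, c e = ∑ e ∈ Mopt, c e := by
    rw [Finset.inter_comm]
    exact Finset.sum_inter_add_sum_sdiff Mopt M c
  have e3 : ∑ e ∈ M ∩ Mopt, (y e.1 + y e.2) + ∑ e ∈ M \ Mopt, (y e.1 + y e.2)
      = ∑ e ∈ M, (y e.1 + y e.2) :=
    Finset.sum_inter_add_sum_sdiff M Mopt _
  have e4 : ∑ e ∈ M ∩ Mopt, (y e.1 + y e.2) + ∑ e ∈ Mopt \ M, (y e.1 + y e.2)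
      = ∑ e ∈ Mopt, (y e.1 + y e.2) := by
    rw [Finset.inter_comm]
    exact Finset.sum_inter_add_sum_sdiff Mopt M _
  have hsd : ∑ e ∈ symmDiff M Mopt, δ e
      = ∑ e ∈ M \ Mopt, δ e + ∑ e ∈ Mopt \ M, δ e := by
    rw [symmDiff_def]
    exact Finset.sum_union (disjoint_sdiff_sdiff)
  have exp1 : ∑ e ∈ M \ Mopt, (y e.1 + y e.2 + δ e)
      = ∑ e ∈ M \ Mopt, (y e.1 + y e.2) + ∑ e ∈ M \ Mopt, δ e := by
    rw [← Finset.sum_add_distrib]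
  have exp2 : ∑ e ∈ Mopt \ M, (y e.1 + y e.2 - δ e)
      = ∑ e ∈ Mopt \ M, (y e.1 + y e.2) - ∑ e ∈ Mopt \ M, δ e := by
    rw [← Finset.sum_sub_distrib]
  linarith
end

section
/- Let M be an R-optimal (perfect and R-feasible) matching and M_opt an optimal perfect matching in a bipartite graph where: there are at most k₂·n/√r boundary vertices, each of at most l pieces R_j has at most k₁·√r boundary vertices, and δ(u,v) = max{1, i(u,v)·m_j·n/(m√r), 2·i(u,v)·√r} where i(u,v) = 1 iff (u,v) is a boundary edge of piece R_j with m_j edges (∑_j m_j = m). Then c(M) ≤ c(M_opt) + (2k₁ + 4k₂ + 2)·n. -/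
open Finset

lemma pm_sum_fst {V : Type*} [DecidableEq V] {A B : Finset V} {E M : Finset (V × V)}
    {α : Type*} [AddCommMonoid α]
    (hE : ∀ e ∈ E, e.1 ∈ A ∧ e.2 ∈ B) (hM : IsPerfectMatching A B E M) (f : V → α) :
    ∑ e ∈ M, f e.1 = ∑ a ∈ A, f a := by
  apply Finset.sum_bij (fun e _ => e.1)
  · intro e he; exact (hE e (hM.1 he)).1
  · intro e₁ h₁ e₂ h₂ h
    obtain ⟨u, _, hu⟩ := hM.2.1 e₁.1 (hE e₁ (hM.1 h₁)).1
    exact (hu e₁ ⟨h₁, rfl⟩).trans (hu e₂ ⟨h₂, h.symm⟩).symm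
  · intro a ha
    obtain ⟨e, ⟨heM, he1⟩, _⟩ := hM.2.1 a ha
    exact ⟨e, heM, he1⟩
  · intro e he; rfl

lemma pm_sum_snd {V : Type*} [DecidableEq V] {A B : Finset V} {E M : Finset (V × V)}
    {α : Type*} [AddCommMonoid α]
    (hE : ∀ e ∈ E, e.1 ∈ A ∧ e.2 ∈ B) (hM : IsPerfectMatching A B E M) (f : V → α) :
    ∑ e ∈ M, f e.2 = ∑ b ∈ B, f b := by
  apply Finset.sum_bij (fun e _ => e.2)
  · intro e he; exact (hE e (hM.1 he)).2
  · intro e₁ h₁ e₂ h₂ h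
    obtain ⟨u, _, hu⟩ := hM.2.2 e₁.2 (hE e₁ (hM.1 h₁)).2
    exact (hu e₁ ⟨h₁, rfl⟩).trans (hu e₂ ⟨h₂, h.symm⟩).symm
  · intro b hb
    obtain ⟨e, ⟨heM, he2⟩, _⟩ := hM.2.2 b hb
    exact ⟨e, heM, he2⟩
  · intro e he; rfl

lemma pm_card {V : Type*} [DecidableEq V] {A B : Finset V} {E M : Finset (V × V)}
    (hE : ∀ e ∈ E, e.1 ∈ A ∧ e.2 ∈ B) (hM : IsPerfectMatching A B E M) :
    M.card = A.card := by
  have := pm_sum_fst hE hM (fun _ => (1 : ℕ))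
  simpa using this

lemma pm_incident {V : Type*} [DecidableEq V] {A B : Finset V} {E M : Finset (V × V)}
    (hAB : Disjoint A B) (hE : ∀ e ∈ E, e.1 ∈ A ∧ e.2 ∈ B)
    (hM : IsPerfectMatching A B E M) (v : V) :
    (M.filter fun e => e.1 = v ∨ e.2 = v).card ≤ 1 := by
  apply Finset.card_le_one.mpr
  intro e he e' he'
  rw [mem_filter] at he he'
  obtain ⟨heM, hev⟩ := he; obtain ⟨he'M, he'v⟩ := he'
  have h1 := hE e (hM.1 heM); have h2 := hE e' (hM.1 he'M)
  rcases hev with h | h <;> rcases he'v with h' | h'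
  · obtain ⟨u, _, hu⟩ := hM.2.1 v (h ▸ h1.1)
    exact (hu e ⟨heM, h⟩).trans (hu e' ⟨he'M, h'⟩).symm
  · exact absurd (h' ▸ h2.2) (Finset.disjoint_left.mp hAB (h ▸ h1.1))
  · exact absurd (h ▸ h1.2) (Finset.disjoint_left.mp hAB (h' ▸ h2.1))
  · obtain ⟨u, _, hu⟩ := hM.2.2 v (h ▸ h1.2)
    exact (hu e ⟨heM, h⟩).trans (hu e' ⟨he'M, h'⟩).symm

lemma card_le_cover {V : Type*} [DecidableEq V] (D : Finset (V × V)) (Bd : Finset V)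
    (h : ∀ e ∈ D, e.1 ∈ Bd ∨ e.2 ∈ Bd) :
    D.card ≤ ∑ v ∈ Bd, (D.filter fun e => e.1 = v ∨ e.2 = v).card := by
  calc D.card ≤ (Bd.biUnion fun v => D.filter fun e => e.1 = v ∨ e.2 = v).card := by
        apply card_le_card; intro e he; rw [mem_biUnion]
        rcases h e he with h1 | h1
        exacts [⟨e.1, h1, mem_filter.mpr ⟨he, Or.inl rfl⟩⟩,
          ⟨e.2, h1, mem_filter.mpr ⟨he, Or.inr rfl⟩⟩]
    _ ≤ _ := card_biUnion_le

lemma cover_two {V : Type*} [DecidableEq V] {A B : Finset V} {E M Mopt : Finset (V × V)}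
    (hAB : Disjoint A B) (hE : ∀ e ∈ E, e.1 ∈ A ∧ e.2 ∈ B)
    (hM : IsPerfectMatching A B E M) (hMopt : IsPerfectMatching A B E Mopt)
    {D : Finset (V × V)} (hDsub : D ⊆ M ∪ Mopt) {Bd : Finset V}
    (hcov : ∀ e ∈ D, e.1 ∈ Bd ∨ e.2 ∈ Bd) : D.card ≤ 2 * Bd.card := by
  have h2 : ∀ v : V, (D.filter fun e => e.1 = v ∨ e.2 = v).card ≤ 2 := by
    intro v
    calc (D.filter fun e => e.1 = v ∨ e.2 = v).card
        ≤ ((M ∪ Mopt).filter fun e => e.1 = v ∨ e.2 = v).card :=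
          card_le_card (filter_subset_filter _ hDsub)
      _ = ((M.filter fun e => e.1 = v ∨ e.2 = v) ∪
            (Mopt.filter fun e => e.1 = v ∨ e.2 = v)).card := by rw [filter_union]
      _ ≤ (M.filter fun e => e.1 = v ∨ e.2 = v).card
            + (Mopt.filter fun e => e.1 = v ∨ e.2 = v).card := card_union_le _ _
      _ ≤ 1 + 1 := add_le_add (pm_incident hAB hE hM v) (pm_incident hAB hE hMopt v)
  calc D.card ≤ ∑ v ∈ Bd, (D.filter fun e => e.1 = v ∨ e.2 = v).card :=
        card_le_cover D Bd hcov
    _ ≤ ∑ _v ∈ Bd, 2 := sum_le_sum fun v _ => h2 v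
    _ = 2 * Bd.card := by rw [sum_const, smul_eq_mul, mul_comm]

/-- If `M` is `R`-optimal (perfect and `R`-feasible) and `Mopt` an optimal perfect
matching, with boundary structure and `δ` as in an `r`-clustering
(`δ(u,v) = max{1, i(u,v)·m_j·n/(m√r), 2·i(u,v)·√r}`, at most `k₂·n/√r` boundary
vertices in total and at most `k₁·√r` boundary vertices per piece),
then `c(M) ≤ c(Mopt) + (2k₁ + 4k₂ + 2)·n`. -/
theorem ROptimal_cost_le {V ι : Type*} [DecidableEq V] [DecidableEq ι]
    (A B : Finset V) (E M Mopt : Finset (V × V)) (piece : V × V → ι)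
    (boundary : Finset V) (c δ : V × V → ℝ) (y : V → ℝ)
    (n : ℕ) (r k₁ k₂ : ℝ)
    (hr : 1 ≤ Real.sqrt r) (hk₁ : 0 ≤ k₁) (hk₂ : 0 ≤ k₂)
    (hA : A.card = n) (hB : B.card = n) (hAB : Disjoint A B)
    (hEcard : 0 < E.card)
    (hE : ∀ e ∈ E, e.1 ∈ A ∧ e.2 ∈ B)
    (hδ : ∀ e ∈ E, δ e =
      if e.1 ∈ boundary ∨ e.2 ∈ boundary then
        max 1 (max ((((E.filter fun f => piece f = piece e).card : ℝ) * n) /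
          ((E.card : ℝ) * Real.sqrt r)) (2 * Real.sqrt r))
      else 1)
    (hbcard : (boundary.card : ℝ) ≤ k₂ * n / Real.sqrt r)
    (hpiececard : ∀ j : ι,
      (((boundary.filter fun v =>
        (E.filter fun f => piece f = j ∧ (f.1 = v ∨ f.2 = v)).Nonempty).card : ℝ))
        ≤ k₁ * Real.sqrt r)
    (hM : IsPerfectMatching A B E M) (hMopt : IsPerfectMatching A B E Mopt)
    (hfeas : ∀ e ∈ E, 0 ≤ slack M c δ y e)
    (hopt : ∀ M' : Finset (V × V), IsPerfectMatching A B E M' →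
      ∑ e ∈ Mopt, c e ≤ ∑ e ∈ M', c e) :
    ∑ e ∈ M, c e ≤ ∑ e ∈ Mopt, c e + (2 * k₁ + 4 * k₂ + 2) * n := by
  classical
  have hsr0 : (0:ℝ) < Real.sqrt r := lt_of_lt_of_le one_pos hr
  have hsrne : Real.sqrt r ≠ 0 := ne_of_gt hsr0
  have hmpos : (0:ℝ) < (E.card : ℝ) := by exact_mod_cast hEcard
  have hmne : (E.card : ℝ) ≠ 0 := ne_of_gt hmpos
  -- dual sums are equal
  have hMsum : ∑ e ∈ M, (y e.1 + y e.2) = ∑ a ∈ A, y a + ∑ b ∈ B, y b := by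
    rw [Finset.sum_add_distrib, pm_sum_fst hE hM, pm_sum_snd hE hM]
  have hMoptsum : ∑ e ∈ Mopt, (y e.1 + y e.2) = ∑ a ∈ A, y a + ∑ b ∈ B, y b := by
    rw [Finset.sum_add_distrib, pm_sum_fst hE hMopt, pm_sum_snd hE hMopt]
  set D : Finset (V × V) := (M \ Mopt) ∪ (Mopt \ M) with hDdef
  have hDE : D ⊆ E := by
    intro e he
    rcases Finset.mem_union.mp he with h | h
    exacts [hM.1 (Finset.mem_sdiff.mp h).1, hMopt.1 (Finset.mem_sdiff.mp h).1]
  have hDMM : D ⊆ M ∪ Mopt := by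
    intro e he
    rcases Finset.mem_union.mp he with h | h
    exacts [Finset.mem_union_left _ (Finset.mem_sdiff.mp h).1,
      Finset.mem_union_right _ (Finset.mem_sdiff.mp h).1]
  -- Step 1: cost difference is bounded by the δ-sum over the symmetric difference
  have step1 : ∑ e ∈ M, c e - ∑ e ∈ Mopt, c e ≤ ∑ e ∈ D, δ e := by
    have h1 : ∀ e ∈ M, c e - (y e.1 + y e.2) ≤ δ e := by
      intro e he
      have := hfeas e (hM.1 he)
      simp only [slack, if_pos he] at this; linarith
    have h2 : ∀ e ∈ Mopt \ M, -(c e - (y e.1 + y e.2)) ≤ δ e := by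
      intro e he
      rw [Finset.mem_sdiff] at he
      have := hfeas e (hMopt.1 he.1)
      simp only [slack, if_neg he.2] at this; linarith
    have hg : ∑ e ∈ M, c e - ∑ e ∈ Mopt, c e =
        ∑ e ∈ M, (c e - (y e.1 + y e.2)) - ∑ e ∈ Mopt, (c e - (y e.1 + y e.2)) := by
      rw [Finset.sum_sub_distrib, Finset.sum_sub_distrib, hMsum, hMoptsum]; ring
    have hsM := Finset.sum_inter_add_sum_sdiff M Mopt (fun e => c e - (y e.1 + y e.2))
    have hsMopt := Finset.sum_inter_add_sum_sdiff Mopt M (fun e => c e - (y e.1 + y e.2))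
    have hic : Mopt ∩ M = M ∩ Mopt := Finset.inter_comm _ _
    rw [hic] at hsMopt
    have hDsum : ∑ e ∈ D, δ e = ∑ e ∈ M \ Mopt, δ e + ∑ e ∈ Mopt \ M, δ e := by
      rw [hDdef, Finset.sum_union (disjoint_sdiff_sdiff)]
    have hb1 : ∑ e ∈ M \ Mopt, (c e - (y e.1 + y e.2)) ≤ ∑ e ∈ M \ Mopt, δ e :=
      Finset.sum_le_sum fun e he => h1 e (Finset.mem_sdiff.mp he).1
    have hb2 : -∑ e ∈ Mopt \ M, (c e - (y e.1 + y e.2)) ≤ ∑ e ∈ Mopt \ M, δ e := by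
      rw [← Finset.sum_neg_distrib]
      exact Finset.sum_le_sum fun e he => h2 e he
    rw [hg, hDsum]
    linarith
  -- Step 2: bound the δ-sum
  set bset : Finset (V × V) :=
    D.filter (fun e => e.1 ∈ boundary ∨ e.2 ∈ boundary) with hbsetdef
  have hbsetD : bset ⊆ D := Finset.filter_subset _ _
  -- pointwise bound on δ
  have hδle : ∀ e ∈ D, δ e ≤ 1 + (if e.1 ∈ boundary ∨ e.2 ∈ boundary then
      (((E.filter fun f => piece f = piece e).card : ℝ) * n) /
        ((E.card : ℝ) * Real.sqrt r) + 2 * Real.sqrt r else 0) := by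
    intro e he
    rw [hδ e (hDE he)]
    split_ifs with hb
    · have hX : (0:ℝ) ≤ (((E.filter fun f => piece f = piece e).card : ℝ) * n) /
          ((E.card : ℝ) * Real.sqrt r) := by positivity
      have hY : (0:ℝ) ≤ 2 * Real.sqrt r := by positivity
      exact max_le (by linarith) (max_le (by linarith) (by linarith))
    · norm_num
  have hsum1 : ∑ e ∈ D, δ e ≤ (D.card : ℝ) +
      (∑ e ∈ bset, ((((E.filter fun f => piece f = piece e).card : ℝ) * n) /
        ((E.card : ℝ) * Real.sqrt r)) + (bset.card : ℝ) * (2 * Real.sqrt r)) := by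
    calc ∑ e ∈ D, δ e ≤ ∑ e ∈ D, (1 + (if e.1 ∈ boundary ∨ e.2 ∈ boundary then
          (((E.filter fun f => piece f = piece e).card : ℝ) * n) /
            ((E.card : ℝ) * Real.sqrt r) + 2 * Real.sqrt r else 0)) :=
        Finset.sum_le_sum hδle
      _ = (D.card : ℝ) + ∑ e ∈ bset, ((((E.filter fun f => piece f = piece e).card : ℝ) * n) /
            ((E.card : ℝ) * Real.sqrt r) + 2 * Real.sqrt r) := by
          rw [Finset.sum_add_distrib, Finset.sum_const, nsmul_eq_mul, mul_one,
            hbsetdef, Finset.sum_filter]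
      _ = (D.card : ℝ) + (∑ e ∈ bset, ((((E.filter fun f => piece f = piece e).card : ℝ) * n) /
            ((E.card : ℝ) * Real.sqrt r)) + (bset.card : ℝ) * (2 * Real.sqrt r)) := by
          rw [Finset.sum_add_distrib, Finset.sum_const, nsmul_eq_mul]
  -- cardinality bounds
  have hMcard : M.card = n := (pm_card hE hM).trans hA
  have hMoptcard : Mopt.card = n := (pm_card hE hMopt).trans hA
  have hDcard : (D.card : ℝ) ≤ 2 * n := by
    have : D.card ≤ 2 * n := by
      calc D.card ≤ (M \ Mopt).card + (Mopt \ M).card := Finset.card_union_le _ _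
        _ ≤ M.card + Mopt.card :=
            add_le_add (Finset.card_le_card (Finset.sdiff_subset))
              (Finset.card_le_card (Finset.sdiff_subset))
        _ = 2 * n := by rw [hMcard, hMoptcard]; ring
    exact_mod_cast this
  have hbsetcard : (bset.card : ℝ) ≤ 2 * (k₂ * n / Real.sqrt r) := by
    have h1 : bset.card ≤ 2 * boundary.card := by
      apply cover_two hAB hE hM hMopt (hbsetD.trans hDMM)
      intro e he
      exact (Finset.mem_filter.mp he).2
    calc (bset.card : ℝ) ≤ 2 * (boundary.card : ℝ) := by exact_mod_cast h1
      _ ≤ 2 * (k₂ * n / Real.sqrt r) := by linarith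
  -- bound on the piece-weighted sum
  have hpiecesum : ∑ e ∈ bset, ((((E.filter fun f => piece f = piece e).card : ℝ) * n) /
      ((E.card : ℝ) * Real.sqrt r)) ≤ 2 * k₁ * n := by
    rw [Finset.sum_comp (fun j => (((E.filter fun f => piece f = j).card : ℝ) * n) /
      ((E.card : ℝ) * Real.sqrt r)) piece]
    have hjcard : ∀ j ∈ bset.image piece,
        ((bset.filter fun e => piece e = j).card : ℝ) ≤ 2 * (k₁ * Real.sqrt r) := by
      intro j _
      have h1 : (bset.filter fun e => piece e = j).card ≤ 2 * (boundary.filter fun v =>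
          (E.filter fun f => piece f = j ∧ (f.1 = v ∨ f.2 = v)).Nonempty).card := by
        apply cover_two hAB hE hM hMopt
          (((Finset.filter_subset _ _).trans hbsetD).trans hDMM)
        intro e he
        rw [Finset.mem_filter] at he
        obtain ⟨hebset, hej⟩ := he
        rw [hbsetdef, Finset.mem_filter] at hebset
        obtain ⟨heD, hbd⟩ := hebset
        have heE : e ∈ E := hDE heD
        rcases hbd with hv | hv
        · exact Or.inl (Finset.mem_filter.mpr ⟨hv, ⟨e, Finset.mem_filter.mpr
            ⟨heE, hej, Or.inl rfl⟩⟩⟩)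
        · exact Or.inr (Finset.mem_filter.mpr ⟨hv, ⟨e, Finset.mem_filter.mpr
            ⟨heE, hej, Or.inr rfl⟩⟩⟩)
      calc ((bset.filter fun e => piece e = j).card : ℝ)
          ≤ 2 * ((boundary.filter fun v =>
            (E.filter fun f => piece f = j ∧ (f.1 = v ∨ f.2 = v)).Nonempty).card : ℝ) := by
            exact_mod_cast h1
        _ ≤ 2 * (k₁ * Real.sqrt r) := by
            have := hpiececard j; linarith
    have hstep : ∑ j ∈ bset.image piece, ((bset.filter fun e => piece e = j).card) •
        ((((E.filter fun f => piece f = j).card : ℝ) * n) / ((E.card : ℝ) * Real.sqrt r))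
        ≤ ∑ j ∈ bset.image piece, (2 * (k₁ * Real.sqrt r)) *
          ((((E.filter fun f => piece f = j).card : ℝ) * n) / ((E.card : ℝ) * Real.sqrt r)) := by
      apply Finset.sum_le_sum
      intro j hj
      rw [nsmul_eq_mul]
      apply mul_le_mul_of_nonneg_right (hjcard j hj) (by positivity)
    refine hstep.trans ?_
    rw [← Finset.mul_sum]
    have hEsum : ∑ j ∈ bset.image piece, (((E.filter fun f => piece f = j).card : ℝ)) ≤
        (E.card : ℝ) := by
      have h1 : ∑ j ∈ bset.image piece, ((E.filter fun f => piece f = j).card) ≤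
          ∑ j ∈ E.image piece, ((E.filter fun f => piece f = j).card) := by
        apply Finset.sum_le_sum_of_subset
        apply Finset.image_subset_image (hbsetD.trans hDE)
      have h2 := (Finset.card_eq_sum_card_image piece E).symm
      exact_mod_cast h1.trans_eq h2
    have hfact : ∑ j ∈ bset.image piece, ((((E.filter fun f => piece f = j).card : ℝ) * n) /
        ((E.card : ℝ) * Real.sqrt r)) =
        (∑ j ∈ bset.image piece, (((E.filter fun f => piece f = j).card : ℝ))) *
          ((n : ℝ) / ((E.card : ℝ) * Real.sqrt r)) := by
      rw [Finset.sum_mul]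
      apply Finset.sum_congr rfl
      intro j _
      rw [mul_div_assoc]
    rw [hfact]
    have hb1 : (∑ j ∈ bset.image piece, (((E.filter fun f => piece f = j).card : ℝ))) *
        ((n : ℝ) / ((E.card : ℝ) * Real.sqrt r)) ≤
        (E.card : ℝ) * ((n : ℝ) / ((E.card : ℝ) * Real.sqrt r)) :=
      mul_le_mul_of_nonneg_right hEsum (by positivity)
    have hb2 : (E.card : ℝ) * ((n : ℝ) / ((E.card : ℝ) * Real.sqrt r)) = (n : ℝ) / Real.sqrt r := by
      field_simp
    have hb3 : 2 * (k₁ * Real.sqrt r) * ((n : ℝ) / Real.sqrt r) = 2 * k₁ * n := by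
      field_simp
    calc 2 * (k₁ * Real.sqrt r) * ((∑ j ∈ bset.image piece,
          (((E.filter fun f => piece f = j).card : ℝ))) * ((n : ℝ) / ((E.card : ℝ) * Real.sqrt r)))
        ≤ 2 * (k₁ * Real.sqrt r) * ((n : ℝ) / Real.sqrt r) := by
          have hmm := mul_le_mul_of_nonneg_left hb1
            (by positivity : (0:ℝ) ≤ 2 * (k₁ * Real.sqrt r))
          rw [hb2] at hmm; exact hmm
      _ = 2 * k₁ * n := hb3
  -- bound on the 2√r part
  have h2sr : (bset.card : ℝ) * (2 * Real.sqrt r) ≤ 4 * k₂ * n := by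
    have h1 : (bset.card : ℝ) * (2 * Real.sqrt r) ≤
        (2 * (k₂ * n / Real.sqrt r)) * (2 * Real.sqrt r) :=
      mul_le_mul_of_nonneg_right hbsetcard (by positivity)
    have h2 : (2 * (k₂ * n / Real.sqrt r)) * (2 * Real.sqrt r) = 4 * k₂ * n := by
      field_simp; ring
    linarith
  have step2 : ∑ e ∈ D, δ e ≤ (2 * k₁ + 4 * k₂ + 2) * n := by
    calc ∑ e ∈ D, δ e ≤ (D.card : ℝ) +
        (∑ e ∈ bset, ((((E.filter fun f => piece f = piece e).card : ℝ) * n) /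
          ((E.card : ℝ) * Real.sqrt r)) + (bset.card : ℝ) * (2 * Real.sqrt r)) := hsum1
      _ ≤ 2 * n + (2 * k₁ * n + 4 * k₂ * n) := by linarith
      _ = (2 * k₁ + 4 * k₂ + 2) * n := by ring
  linarith
end

section
/- Let v ∈ A be a matched boundary vertex lying on an admissible alternating path/cycle P whose edges are switched (M ← M ⊕ P), where the matching edge (v,v') incident to v lies on P and is admissible. If δ(v,v') ≥ 2√r, then after switching, every residual edge leaving v has slack at least 2√r; in particular v has no admissible outgoing edge in H (admissible meaning slack ≤ √r). -/
/-- After switching along an admissible alternating path/cycle `P` containing the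
edge `(v, v')` (which becomes the matching edge of `v ∈ A` in `M ⊕ P`), if
`δ(v,v') ≥ 2√r` and `(v,v')` was admissible (slack at most `√r`) before switching,
then every residual edge leaving `v` (i.e. the matching edge of `v` in `M ⊕ P`) has
slack at least `2√r`; in particular none is admissible (slack ≤ √r). -/
theorem no_admissible_out_edge_after_switch {V : Type*} [DecidableEq V]
    (M P : Finset (V × V)) (c δ : V × V → ℝ) (y : V → ℝ)
    (v v' : V) (r : ℝ)
    (hr : 0 < Real.sqrt r)
    (hmatch' : IsMatching (symmDiff M P))
    (hvP : (v, v') ∈ P) (hvM' : (v, v') ∈ symmDiff M P)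
    (hadm : slack M c δ y (v, v') ≤ Real.sqrt r)
    (hδ : 2 * Real.sqrt r ≤ δ (v, v')) :
    ∀ b : V, (v, b) ∈ symmDiff M P →
      2 * Real.sqrt r ≤ slack (symmDiff M P) c δ y (v, b) ∧
      ¬ slack (symmDiff M P) c δ y (v, b) ≤ Real.sqrt r := by
  intro b hb
  -- b = v'
  have hbv : b = v' := by
    by_contra hne
    have := hmatch' _ hb _ hvM' (by simp [hne])
    exact this.1 rfl
  subst hbv
  have hnM : (v, b) ∉ M := by
    rcases Finset.mem_symmDiff.mp hvM' with ⟨_, h⟩ | ⟨_, h⟩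
    · exact absurd hvP h
    · exact h
  have hold : c (v, b) + δ (v, b) - y v - y b ≤ Real.sqrt r := by
    simpa [slack, hnM] using hadm
  have hnew : slack (symmDiff M P) c δ y (v, b)
      = y v + y b - c (v, b) + δ (v, b) := by
    simp [slack, hb]
  constructor
  · rw [hnew]; linarith
  · rw [hnew]; linarith
end

section
/- Suppose an algorithm maintains, before each augmentation i, an R-feasible matching M^{(i-1)} with duals y^i such that free vertices of A have dual 0 and free vertices of B have dual at least Δ_i, and such that c(M^{(i-1)}) = O(n) and ∑_{(u,v) ∈ M* ⊕ M^{(i-1)}} δ(u,v) = O(n) for an optimal perfect matching M* with c(M*) = O(n). Then |B_F^i| · Δ_i = O(n), where B_F^i is the set of free B-vertices before iteration i. -/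
section Aux
variable {V : Type*} [DecidableEq V]

lemma sum_fst_matching (M : Finset (V × V)) (hMm : IsMatching M) (y : V → ℝ) :
    ∑ e ∈ M, y e.1 = ∑ a ∈ M.image Prod.fst, y a := by
  rw [Finset.sum_image]
  intro e he f hf h
  by_contra hne
  exact (hMm e he f hf hne).1 h

lemma sum_snd_matching (M : Finset (V × V)) (hMm : IsMatching M) (y : V → ℝ) :
    ∑ e ∈ M, y e.2 = ∑ b ∈ M.image Prod.snd, y b := by
  rw [Finset.sum_image]
  intro e he f hf h
  by_contra hne
  exact (hMm e he f hf hne).2 h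

end Aux

/-- If an algorithm maintains an `R`-feasible matching `M` with duals `y` where free
`A`-vertices have dual `0`, free `B`-vertices have dual at least `Δ`, with
`c(M) ≤ C₁·n`, `∑_{M ⊕ M*} δ ≤ C₂·n` and `c(M*) ≤ C₃·n` for an optimal perfect
matching `M*`, then `|B_F|·Δ = O(n)`. -/
theorem free_count_mul_dual_le {V : Type*} [DecidableEq V]
    (A B : Finset V) (E M Mstar : Finset (V × V))
    (c δ : V × V → ℝ) (y : V → ℝ) (n : ℕ) (Δ C₁ C₂ C₃ : ℝ)
    (hAB : Disjoint A B) (hA : A.card = n) (hB : B.card = n)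
    (hE : ∀ e ∈ E, e.1 ∈ A ∧ e.2 ∈ B)
    (hc : ∀ e ∈ E, 0 ≤ c e) (hΔ : 0 ≤ Δ) (hC₁ : 0 ≤ C₁)
    (hM : M ⊆ E) (hMm : IsMatching M)
    (hMs : Mstar ⊆ E) (hMsm : IsMatching Mstar)
    (hperfA : ∀ a ∈ A, ∃ e ∈ Mstar, e.1 = a)
    (hperfB : ∀ b ∈ B, ∃ e ∈ Mstar, e.2 = b)
    (hfeas : ∀ e ∈ E, 0 ≤ slack M c δ y e)
    (hfreeA : ∀ a ∈ A, (∀ e ∈ M, e.1 ≠ a) → y a = 0)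
    (hfreeB : ∀ b ∈ B, (∀ e ∈ M, e.2 ≠ b) → Δ ≤ y b)
    (hcM : ∑ e ∈ M, c e ≤ C₁ * n)
    (hδsum : ∑ e ∈ symmDiff M Mstar, δ e ≤ C₂ * n)
    (hcMs : ∑ e ∈ Mstar, c e ≤ C₃ * n) :
    ((B.filter fun b => ∀ e ∈ M, e.2 ≠ b).card : ℝ) * Δ
      ≤ (C₁ + C₂ + C₃) * n := by
  classical
  -- identify images
  have himMfst : M.image Prod.fst = A.filter (fun a => ¬ ∀ e ∈ M, e.1 ≠ a) := by
    ext a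
    simp only [Finset.mem_image, Finset.mem_filter, not_forall]
    constructor
    · rintro ⟨e, he, rfl⟩
      exact ⟨(hE e (hM he)).1, e, he, by simp⟩
    · rintro ⟨_, e, he, hne⟩
      exact ⟨e, he, by push_neg at hne; exact hne⟩
  have himMsnd : M.image Prod.snd = B.filter (fun b => ¬ ∀ e ∈ M, e.2 ≠ b) := by
    ext b
    simp only [Finset.mem_image, Finset.mem_filter, not_forall]
    constructor
    · rintro ⟨e, he, rfl⟩
      exact ⟨(hE e (hM he)).2, e, he, by simp⟩
    · rintro ⟨_, e, he, hne⟩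
      exact ⟨e, he, by push_neg at hne; exact hne⟩
  have himMsfst : Mstar.image Prod.fst = A := by
    ext a
    simp only [Finset.mem_image]
    constructor
    · rintro ⟨e, he, rfl⟩; exact (hE e (hMs he)).1
    · intro ha; obtain ⟨e, he, h⟩ := hperfA a ha; exact ⟨e, he, h⟩
  have himMssnd : Mstar.image Prod.snd = B := by
    ext b
    simp only [Finset.mem_image]
    constructor
    · rintro ⟨e, he, rfl⟩; exact (hE e (hMs he)).2
    · intro hb; obtain ⟨e, he, h⟩ := hperfB b hb; exact ⟨e, he, h⟩
  -- vertex sums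
  have hMsum : ∑ e ∈ M, (y e.1 + y e.2)
      = (∑ a ∈ A.filter (fun a => ¬ ∀ e ∈ M, e.1 ≠ a), y a)
        + (∑ b ∈ B.filter (fun b => ¬ ∀ e ∈ M, e.2 ≠ b), y b) := by
    rw [Finset.sum_add_distrib, sum_fst_matching M hMm, sum_snd_matching M hMm,
      himMfst, himMsnd]
  have hMssum : ∑ e ∈ Mstar, (y e.1 + y e.2) = (∑ a ∈ A, y a) + (∑ b ∈ B, y b) := by
    rw [Finset.sum_add_distrib, sum_fst_matching Mstar hMsm, sum_snd_matching Mstar hMsm,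
      himMsfst, himMssnd]
  -- split A and B by free/matched
  have hAsplit : ∑ a ∈ A.filter (fun a => ∀ e ∈ M, e.1 ≠ a), y a
      + ∑ a ∈ A.filter (fun a => ¬ ∀ e ∈ M, e.1 ≠ a), y a = ∑ a ∈ A, y a :=
    Finset.sum_filter_add_sum_filter_not A _ y
  have hBsplit : ∑ b ∈ B.filter (fun b => ∀ e ∈ M, e.2 ≠ b), y b
      + ∑ b ∈ B.filter (fun b => ¬ ∀ e ∈ M, e.2 ≠ b), y b = ∑ b ∈ B, y b :=
    Finset.sum_filter_add_sum_filter_not B _ y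
  have hfreeAzero : ∑ a ∈ A.filter (fun a => ∀ e ∈ M, e.1 ≠ a), y a = 0 := by
    apply Finset.sum_eq_zero
    intro a ha
    rw [Finset.mem_filter] at ha
    exact hfreeA a ha.1 ha.2
  have hcard : ((B.filter fun b => ∀ e ∈ M, e.2 ≠ b).card : ℝ) * Δ
      ≤ ∑ b ∈ B.filter (fun b => ∀ e ∈ M, e.2 ≠ b), y b := by
    rw [← nsmul_eq_mul]
    apply Finset.card_nsmul_le_sum
    intro b hb
    rw [Finset.mem_filter] at hb
    exact hfreeB b hb.1 hb.2
  -- slack sums over the symmetric difference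
  have hs1 : 0 ≤ ∑ e ∈ Mstar \ M, (c e + δ e - (y e.1 + y e.2)) := by
    apply Finset.sum_nonneg
    intro e he
    rw [Finset.mem_sdiff] at he
    have := hfeas e (hMs he.1)
    rw [slack, if_neg he.2] at this
    linarith
  have hs2 : 0 ≤ ∑ e ∈ M \ Mstar, ((y e.1 + y e.2) - c e + δ e) := by
    apply Finset.sum_nonneg
    intro e he
    rw [Finset.mem_sdiff] at he
    have := hfeas e (hM he.1)
    rw [slack, if_pos he.1] at this
    linarith
  -- expand the two slack sums
  have hexp1 : ∑ e ∈ Mstar \ M, (c e + δ e - (y e.1 + y e.2))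
      = ∑ e ∈ Mstar \ M, c e + ∑ e ∈ Mstar \ M, δ e
        - ∑ e ∈ Mstar \ M, (y e.1 + y e.2) := by
    rw [Finset.sum_sub_distrib, Finset.sum_add_distrib]
  have hexp2 : ∑ e ∈ M \ Mstar, ((y e.1 + y e.2) - c e + δ e)
      = ∑ e ∈ M \ Mstar, (y e.1 + y e.2) - ∑ e ∈ M \ Mstar, c e
        + ∑ e ∈ M \ Mstar, δ e := by
    rw [Finset.sum_add_distrib, Finset.sum_sub_distrib]
  -- symmetric difference of sums
  have hsd : ∑ e ∈ symmDiff M Mstar, δ e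
      = ∑ e ∈ M \ Mstar, δ e + ∑ e ∈ Mstar \ M, δ e := by
    rw [symmDiff_def]
    exact Finset.sum_union (disjoint_sdiff_sdiff)
  -- relate sdiff sums to full sums
  have hys : ∀ (f : V × V → ℝ), ∑ e ∈ Mstar \ M, f e - ∑ e ∈ M \ Mstar, f e
      = ∑ e ∈ Mstar, f e - ∑ e ∈ M, f e := by
    intro f
    have h1 : ∑ e ∈ Mstar ∩ M, f e + ∑ e ∈ Mstar \ M, f e = ∑ e ∈ Mstar, f e :=
      Finset.sum_inter_add_sum_sdiff Mstar M f
    have h2 : ∑ e ∈ M ∩ Mstar, f e + ∑ e ∈ M \ Mstar, f e = ∑ e ∈ M, f e :=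
      Finset.sum_inter_add_sum_sdiff M Mstar f
    rw [Finset.inter_comm] at h1
    linarith
  have hcs : ∑ e ∈ Mstar \ M, c e ≤ ∑ e ∈ Mstar, c e := by
    apply Finset.sum_le_sum_of_subset_of_nonneg (Finset.sdiff_subset)
    intro e he _
    exact hc e (hMs he)
  have hcm : 0 ≤ ∑ e ∈ M \ Mstar, c e := by
    apply Finset.sum_nonneg
    intro e he
    exact hc e (hM (Finset.mem_sdiff.mp he).1)
  have hyc := hys (fun e => y e.1 + y e.2)
  have hn : (0:ℝ) ≤ C₁ * n := mul_nonneg hC₁ (Nat.cast_nonneg n)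
  have key := hδsum
  rw [hsd] at key
  nlinarith [hs1, hs2, hexp1, hexp2, hMsum, hMssum, hAsplit, hBsplit,
    hfreeAzero, hcard, hyc, hcs, hcm, hcMs, hn, key]
end
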